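/- Suppose node i's sequences satisfy d̃_i(t) = γ d̃_i(t−1) + ∇F_i(w̃_i(t−1)), w̃_i(t) = w̃_i(t−1) − η d̃_i(t), and the centralized sequences satisfy d(t) = γ d(t−1) + ∇F(w(t−1)), w(t) = w(t−1) − η d(t), for (k−1)τ < t ≤ kτ, with equal initial values d̃_i((k−1)τ) = d((k−1)τ) and w̃_i((k−1)τ) = w((k−1)τ). If F_i is β-smooth and ‖∇F(w) − ∇F_i(w)‖ ≤ δ_i for all w, then for all t with (k−1)τ ≤ t ≤ kτ: ‖w̃_i(t) − w(t)‖ ≤ f_i(t − (k−1)τ), where f_i(x) = (δ_i/β)(γ^x (C A^x + D B^x) − 1). -/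

import Mathlib

/-- Auxiliary recursively-defined bound sequence. -/
def Hseq (γ β δi : ℝ) (G : ℕ → ℝ) : ℕ → ℝ
  | 0 => 0
  | j + 1 => γ * Hseq γ β δi G j + β * G j + δi

/-- Over an aggregation interval `[(k−1)τ, kτ]`, if node `i`'s sequences
and the centralized sequences follow the MGD recursions with equal initial values
at `(k−1)τ`, `F_i` is β-smooth and `‖∇F(w) − ∇F_i(w)‖ ≤ δ_i`, then for all
`(k−1)τ ≤ t ≤ kτ`: `‖w̃_i(t) − w(t)‖ ≤ f_i(t − (k−1)τ)` where
`f_i(x) = (δ_i/β)(γ^x (C A^x + D B^x) − 1)`. -/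
theorem local_parameter_gap_bound
    (n : ℕ) (Fi F : EuclideanSpace ℝ (Fin n) → ℝ)
    (hFi : Differentiable ℝ Fi) (hF : Differentiable ℝ F)
    (η β γ δi : ℝ) (hη : 0 < η) (hβ : 0 < β) (hγ0 : 0 < γ) (hγ1 : γ < 1) (hδi : 0 ≤ δi)
    (hsmooth : ∀ w₁ w₂, ‖gradient Fi w₁ - gradient Fi w₂‖ ≤ β * ‖w₁ - w₂‖)
    (hdiv : ∀ v, ‖gradient F v - gradient Fi v‖ ≤ δi)
    (A B C D : ℝ)
    (hA : A = ((1 + γ + η * β) + Real.sqrt ((1 + γ + η * β) ^ 2 - 4 * γ)) / (2 * γ))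
    (hB : B = ((1 + γ + η * β) - Real.sqrt ((1 + γ + η * β) ^ 2 - 4 * γ)) / (2 * γ))
    (hC : C = (A - 1) / (A - B))
    (hD : D = (1 - B) / (A - B))
    (τ k : ℕ) (hτ : 1 ≤ τ) (hk : 1 ≤ k)
    (dtil wtil d w : ℕ → EuclideanSpace ℝ (Fin n))
    (hinit_d : dtil ((k - 1) * τ) = d ((k - 1) * τ))
    (hinit_w : wtil ((k - 1) * τ) = w ((k - 1) * τ))
    (hrec_loc : ∀ t : ℕ, (k - 1) * τ < t → t ≤ k * τ →
      dtil t = γ • dtil (t - 1) + gradient Fi (wtil (t - 1)) ∧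
      wtil t = wtil (t - 1) - η • dtil t)
    (hrec_cen : ∀ t : ℕ, (k - 1) * τ < t → t ≤ k * τ →
      d t = γ • d (t - 1) + gradient F (w (t - 1)) ∧
      w t = w (t - 1) - η • d t) :
    ∀ t : ℕ, (k - 1) * τ ≤ t → t ≤ k * τ →
      ‖wtil t - w t‖ ≤
        δi / β * (γ ^ (t - (k - 1) * τ) *
          (C * A ^ (t - (k - 1) * τ) + D * B ^ (t - (k - 1) * τ)) - 1) := by
  set m := (k - 1) * τ with hm
  have hγ' : γ ≠ 0 := ne_of_gt hγ0
  have hβ' : β ≠ 0 := ne_of_gt hβ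
  set p : ℝ := 1 + γ + η * β with hp
  have hdisc : 0 < p ^ 2 - 4 * γ := by
    have := mul_pos hη hβ
    nlinarith [sq_nonneg (1 - γ), sq_nonneg (η * β)]
  set s : ℝ := Real.sqrt (p ^ 2 - 4 * γ) with hs
  have hspos : 0 < s := Real.sqrt_pos.mpr hdisc
  have hss : s * s = p ^ 2 - 4 * γ := Real.mul_self_sqrt (le_of_lt hdisc)
  have hABne : A - B ≠ 0 := by
    rw [hA, hB]
    have h : (p + s) / (2 * γ) - (p - s) / (2 * γ) = s / γ := by field_simp; ring
    rw [h]
    exact div_ne_zero (ne_of_gt hspos) hγ'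
  have hxq : (γ * A) * (γ * A) = p * (γ * A) - γ := by
    rw [hA]
    field_simp
    linear_combination hss
  have hyq : (γ * B) * (γ * B) = p * (γ * B) - γ := by
    rw [hB]
    field_simp
    linear_combination hss
  have hCD : C + D = 1 := by
    rw [hC, hD]
    field_simp
    ring
  have hsum : A + B = p / γ := by
    rw [hA, hB]; field_simp; ring
  have hCxDy : C * (γ * A) + D * (γ * B) = 1 + η * β := by
    have h1 : C * A + D * B = A + B - 1 := by
      rw [hC, hD]; field_simp; ring
    have h2 : C * (γ * A) + D * (γ * B) = γ * (C * A + D * B) := by ring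
    rw [h2, h1, hsum]
    field_simp
    ring
  set G : ℕ → ℝ := fun j => δi / β * (γ ^ j * (C * A ^ j + D * B ^ j) - 1) with hG
  set H : ℕ → ℝ := Hseq γ β δi G with hH
  have hG0 : G 0 = 0 := by
    simp only [hG, pow_zero, one_mul, mul_one]
    rw [hCD]; ring
  have hGx : ∀ j, G j = δi / β * (C * (γ * A) ^ j + D * (γ * B) ^ j - 1) := by
    intro j; simp only [hG, mul_pow]; ring
  have hH0 : H 0 = 0 := rfl
  have hHs : ∀ j, H (j + 1) = γ * H j + β * G j + δi := by
    intro j; rw [hH, Hseq]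
  have hkey : ∀ j, G (j + 1) = G j + η * H (j + 1) := by
    intro j
    induction j with
    | zero =>
      rw [hHs, hH0, hG0, hGx 1]
      simp only [pow_one]
      rw [hCxDy]
      field_simp
      ring
    | succ j ih =>
      have halg : G (j + 2) - G (j + 1) =
          γ * (G (j + 1) - G j) + η * β * G (j + 1) + η * δi := by
        rw [hGx (j + 2), hGx (j + 1), hGx j]
        have e2 : ∀ z : ℝ, z ^ (j + 2) = z ^ j * (z * z) := by intro z; ring
        have e1 : ∀ z : ℝ, z ^ (j + 1) = z ^ j * z := by intro z; ring
        rw [e2, e2, e1, e1, hxq, hyq]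
        field_simp
        ring
      have e : G (j + 1) - G j = η * H (j + 1) := by linarith [ih]
      rw [hHs (j + 1)]
      linear_combination halg + γ * e
  have main : ∀ j, m + j ≤ k * τ →
      ‖dtil (m + j) - d (m + j)‖ ≤ H j ∧ ‖wtil (m + j) - w (m + j)‖ ≤ G j := by
    intro j
    induction j with
    | zero =>
      intro _
      simp only [Nat.add_zero, hinit_d, hinit_w, sub_self, norm_zero]
      exact ⟨le_of_eq hH0.symm, le_of_eq hG0.symm⟩
    | succ j ih =>
      intro hle
      have hle' : m + j ≤ k * τ := by omega
      obtain ⟨ihd, ihw⟩ := ih hle'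
      set t := m + j + 1 with ht
      have hlt : m < t := by omega
      have htk : t ≤ k * τ := hle
      obtain ⟨hd1, hw1⟩ := hrec_loc t hlt htk
      obtain ⟨hd2, hw2⟩ := hrec_cen t hlt htk
      have ht1 : t - 1 = m + j := by omega
      rw [ht1] at hd1 hw1 hd2 hw2
      set u := dtil (m + j) - d (m + j) with hu
      set v := gradient Fi (wtil (m + j)) - gradient F (w (m + j)) with hv
      have hdd : dtil t - d t = γ • u + v := by
        rw [hu, hv, hd1, hd2]; module
      have hgrad : ‖v‖ ≤ β * ‖wtil (m + j) - w (m + j)‖ + δi := by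
        rw [hv]
        have tri : ‖gradient Fi (wtil (m + j)) - gradient F (w (m + j))‖ ≤
            ‖gradient Fi (wtil (m + j)) - gradient Fi (w (m + j))‖ +
            ‖gradient Fi (w (m + j)) - gradient F (w (m + j))‖ :=
          norm_sub_le_norm_sub_add_norm_sub _ _ _
        have h2 : ‖gradient Fi (w (m + j)) - gradient F (w (m + j))‖ ≤ δi := by
          rw [norm_sub_rev]; exact hdiv _
        exact tri.trans (add_le_add (hsmooth _ _) h2)
      have hvb : ‖v‖ ≤ β * G j + δi := by
        refine hgrad.trans ?_
        have := mul_le_mul_of_nonneg_left ihw hβ.le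
        linarith
      have hDbound : ‖dtil t - d t‖ ≤ H (j + 1) := by
        rw [hdd, hHs]
        calc ‖γ • u + v‖ ≤ ‖γ • u‖ + ‖v‖ := norm_add_le _ _
          _ = γ * ‖u‖ + ‖v‖ := by
                rw [norm_smul, Real.norm_eq_abs, abs_of_pos hγ0]
          _ ≤ γ * H j + (β * G j + δi) :=
              add_le_add (mul_le_mul_of_nonneg_left ihd hγ0.le) hvb
          _ = γ * H j + β * G j + δi := by ring
      refine ⟨hDbound, ?_⟩
      have hww : wtil t - w t = (wtil (m + j) - w (m + j)) - η • (dtil t - d t) := by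
        rw [hw1, hw2]; module
      calc ‖wtil t - w t‖
          ≤ ‖wtil (m + j) - w (m + j)‖ + ‖η • (dtil t - d t)‖ := by
            rw [hww]; exact norm_sub_le _ _
        _ = ‖wtil (m + j) - w (m + j)‖ + η * ‖dtil t - d t‖ := by
            rw [norm_smul, Real.norm_eq_abs, abs_of_pos hη]
        _ ≤ G j + η * H (j + 1) :=
            add_le_add ihw (mul_le_mul_of_nonneg_left hDbound hη.le)
        _ = G (j + 1) := (hkey j).symm
  intro t htl htu
  have ht : t = m + (t - m) := by omega
  have hfin := (main (t - m) (by omega)).2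
  rw [← ht] at hfin
  simpa only [hG] using hfin
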